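/- Let X and Z be disjoint finite sets, Q ∈ 𝔓(Z), let y be a point not contained in X ∪ Z, and set W = X ∪ Z. For every R ∈ 𝔐*_{Q+A_y}(X, Z∪{y}), with T = τ_{W ∩ ↓_R y, W \ ↓_R y}(R|_W), the set W \ ↓_R y equals ↑_T Z; consequently R = τ_{W \ ↑_T Z, ↑_T Z}(T), so R is uniquely determined by T and the mapping σ : R ↦ τ_{W ∩ ↓_R y, W \ ↓_R y}(R|_W) is injective on 𝔐*_{Q+A_y}(X, Z∪{y}). -/

import Mathlib

namespace Erne

variable {α : Type*}

/-- A partial order relation with carrier `X`: a reflexive, antisymmetric,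
transitive subset of `X × X`. -/
def IsPor (X : Set α) (R : Set (α × α)) : Prop :=
  R ⊆ X ×ˢ X ∧ (∀ x ∈ X, (x, x) ∈ R) ∧
    (∀ x y, (x, y) ∈ R → (y, x) ∈ R → x = y) ∧
    (∀ x y z, (x, y) ∈ R → (y, z) ∈ R → (x, z) ∈ R)

/-- The carrier of a p.o.r. (recovered from reflexivity). -/
def carrier (R : Set (α × α)) : Set α := {x | (x, x) ∈ R}

/-- The induced p.o.r. `R|_M = R ∩ (M × M)`. -/
def restrict (R : Set (α × α)) (M : Set α) : Set (α × α) := R ∩ M ×ˢ M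

/-- The dual `R^d`. -/
def dual (R : Set (α × α)) : Set (α × α) := {p | (p.2, p.1) ∈ R}

/-- `↑_R M`. -/
def upSet (R : Set (α × α)) (M : Set α) : Set α := {x | ∃ y ∈ M, (y, x) ∈ R}

/-- `↓_R M`. -/
def downSet (R : Set (α × α)) (M : Set α) : Set α := {x | ∃ y ∈ M, (x, y) ∈ R}

/-- `↑_R x`. -/
def up (R : Set (α × α)) (x : α) : Set α := {z | (x, z) ∈ R}

/-- `↓_R y`. -/
def down (R : Set (α × α)) (y : α) : Set α := {x | (x, y) ∈ R}

/-- `L` is a lower end of `R`. -/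
def IsLowerEnd (R : Set (α × α)) (L : Set α) : Prop :=
  ∀ x y, (x, y) ∈ R → y ∈ L → x ∈ L

/-- `U` is an upper end of `R`. -/
def IsUpperEnd (R : Set (α × α)) (U : Set α) : Prop :=
  ∀ x y, (x, y) ∈ R → x ∈ U → y ∈ U

/-- `M` is convex in `R`. -/
def IsConvex (R : Set (α × α)) (M : Set α) : Prop :=
  ∀ a b x, a ∈ M → b ∈ M → (a, x) ∈ R → (x, b) ∈ R → x ∈ M

/-- The set of maximal points of `R`: those `x` with `↑_R x = {x}`. -/
def maxPts (R : Set (α × α)) : Set α := {x | up R x = {x}}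

/-- `max M = max R|_M`. -/
def maxOf (R : Set (α × α)) (M : Set α) : Set α := maxPts (restrict R M)

/-- `γ_R(M) = ⋃_{(m,n) ∈ M×M} (↑_R m) ∩ (↓_R n)`, the convex hull of `M` in `R`. -/
def gamma (R : Set (α × α)) (M : Set α) : Set α :=
  {x | ∃ m ∈ M, ∃ n ∈ M, (m, x) ∈ R ∧ (x, n) ∈ R}

/-- The antichain (diagonal) `Δ_Y` on `Y`. -/
def diag (Y : Set α) : Set (α × α) := {p | p.1 = p.2 ∧ p.1 ∈ Y}

/-- `𝔘(X,Y)`: p.o.r.'s on `X ∪ Y` in which `Y` is an upper end. -/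
def Uset (X Y : Set α) : Set (Set (α × α)) :=
  {R | IsPor (X ∪ Y) R ∧ IsUpperEnd R Y}

/-- `ℭ_Q(X,Y)`: p.o.r.'s on `X ∪ Y` with `R|_Y = Q` convex in `R`. -/
def Cset (Q : Set (α × α)) (X Y : Set α) : Set (Set (α × α)) :=
  {R | IsPor (X ∪ Y) R ∧ restrict R Y = Q ∧ IsConvex R Y}

/-- `𝔐_Q(X,Y) = 𝔘(X,Y) ∩ ℭ_Q(X,Y)`. -/
def Mset (Q : Set (α × α)) (X Y : Set α) : Set (Set (α × α)) :=
  Uset X Y ∩ Cset Q X Y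

/-- `𝔐*_Q(X,Y)`: members of `ℭ_Q(X,Y)` with `max Q = max R`. -/
def MstarSet (Q : Set (α × α)) (X Y : Set α) : Set (Set (α × α)) :=
  {R ∈ Cset Q X Y | maxPts Q = maxPts R}

/-- `ℑ_Q(X,Y)`: p.o.r.'s on `X ∪ Y` with `R|_Y = Q`. -/
def Iset (Q : Set (α × α)) (X Y : Set α) : Set (Set (α × α)) :=
  {R | IsPor (X ∪ Y) R ∧ restrict R Y = Q}

/-- `𝔑*_Q(X,Y)`: members of `ℑ_Q(X,Y)` with `max Q = max R`. -/
def NstarSet (Q : Set (α × α)) (X Y : Set α) : Set (Set (α × α)) :=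
  {R ∈ Iset Q X Y | maxPts Q = maxPts R}

/-- `τ_{X,Y}(R) = (R|_X)^d ∪ ((X×Y) \ R) ∪ (R|_Y)^d`. -/
def tau (X Y : Set α) (R : Set (α × α)) : Set (α × α) :=
  dual (restrict R X) ∪ ((X ×ˢ Y) \ R) ∪ dual (restrict R Y)

/-- `𝒢_Q(M)`: members `G` of `ℑ_Q(M,Y)` with `γ_G(Y) = c(G)`. -/
def GsetM (Q : Set (α × α)) (Y M : Set α) : Set (Set (α × α)) :=
  {G ∈ Iset Q M Y | gamma G Y = carrier G}

/-- `𝔊_Q(X) = ⋃_{M ⊆ X} 𝒢_Q(M)`. -/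
def Gset (Q : Set (α × α)) (X Y : Set α) : Set (Set (α × α)) :=
  {G | ∃ M ⊆ X, G ∈ GsetM Q Y M}

/-- `ℒ(P)`: the lower ends of `P` (subsets of the carrier of `P`). -/
def lowerEnds (P : Set (α × α)) : Set (Set α) :=
  {L | L ⊆ carrier P ∧ IsLowerEnd P L}

/-- `ℋ_Q(Y, ℒ(P))`: mappings `f : Y → ℒ(P)` with `(a,b) ∈ Q → f a ⊆ f b`. -/
def Hset (Q P : Set (α × α)) (Y : Set α) : Set (↥Y → Set α) :=
  {f | (∀ y, f y ∈ lowerEnds P) ∧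
    ∀ a b : ↥Y, ((a : α), (b : α)) ∈ Q → f a ⊆ f b}

/-- `Φ(f) = P ∪ Q ∪ ⋃_{y ∈ Y} (f(y) × {y})` for `f ∈ ℋ_Q(Y, ℒ(P))`. -/
def Phi (Q : Set (α × α)) (Y : Set α) (P : Set (α × α)) (f : ↥Y → Set α) :
    Set (α × α) :=
  P ∪ Q ∪ {p | ∃ h : p.2 ∈ Y, p.1 ∈ f ⟨p.2, h⟩}

/-- `𝔉_Q(X,Y)`: pairs `(P, f)` with `P ∈ 𝔓(X)` and `f ∈ ℋ_Q(Y, ℒ(P))`;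
the first component encodes `S(f) = P`. -/
def Fset (Q : Set (α × α)) (X Y : Set α) :
    Set (Set (α × α) × (↥Y → Set α)) :=
  {pf | IsPor X pf.1 ∧ pf.2 ∈ Hset Q pf.1 Y}

/-- `𝔉*_Q(X,Y)`: those `f ∈ 𝔉_Q(X,Y)` with `X = ⋃_{y ∈ Y} f(y)`. -/
def FstarSet (Q : Set (α × α)) (X Y : Set α) :
    Set (Set (α × α) × (↥Y → Set α)) :=
  {pf ∈ Fset Q X Y | X = ⋃ y : ↥Y, pf.2 y}

/-- The transitive hull of `S`: the smallest transitive relation containing `S`. -/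
def transHull (S : Set (α × α)) : Set (α × α) :=
  {p | Relation.TransGen (fun a b => (a, b) ∈ S) p.1 p.2}

/-- Membership characterization of `tau`. -/
lemma mem_tau {α : Type*} (A B : Set α) (S : Set (α × α)) (a b : α) :
    (a, b) ∈ tau A B S ↔ ((b, a) ∈ S ∧ b ∈ A ∧ a ∈ A) ∨
      (a ∈ A ∧ b ∈ B ∧ (a, b) ∉ S) ∨ ((b, a) ∈ S ∧ b ∈ B ∧ a ∈ B) := by
  simp only [tau, dual, restrict, Set.mem_union, Set.mem_setOf_eq, Set.mem_inter_iff,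
    Set.mem_prod, Set.mem_diff]
  tauto

/-- In a finite p.o.r., every carrier element lies below a maximal element. -/
lemma exists_up_max {α : Type*} {X : Set α} {R : Set (α × α)} (hX : X.Finite)
    (hR : IsPor X R) : ∀ x, (x, x) ∈ R → ∃ m, up R m = {m} ∧ (x, m) ∈ R := by
  obtain ⟨hsub, hrefl, hanti, htrans⟩ := hR
  have hupfin : ∀ x : α, (up R x).Finite := fun x =>
    hX.subset (fun z hz => (hsub hz).2)
  intro x hx
  generalize hn : (up R x).ncard = n
  induction n using Nat.strong_induction_on generalizing x with
  | _ n ih =>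
    by_cases hmax : up R x = {x}
    · exact ⟨x, hmax, hx⟩
    · have hxin : x ∈ up R x := hx
      have hzex : ∃ z ∈ up R x, z ≠ x := by
        by_contra h
        push_neg at h
        exact hmax (Set.eq_singleton_iff_unique_mem.mpr ⟨hxin, fun z hz => h z hz⟩)
      obtain ⟨z, hz, hzx⟩ := hzex
      have hzz : (z, z) ∈ R := hrefl z (hsub hz).2
      have hsub2 : up R z ⊆ up R x := fun w hw => htrans x z w hz hw
      have hxnot : x ∉ up R z := fun hxz => hzx (hanti z x hxz hz)
      have hss : up R z ⊂ up R x := ⟨hsub2, fun h => hxnot (h hxin)⟩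
      have hlt : (up R z).ncard < n := by
        rw [← hn]; exact Set.ncard_lt_ncard hss (hupfin x)
      obtain ⟨m, hm, hzm⟩ := ih _ hlt z hzz rfl
      exact ⟨m, hm, htrans x z m hz hzm⟩

/-- With `W = X ∪ Z`, for every `R ∈ 𝔐*_{Q+A_y}(X, Z ∪ {y})`
and `T = τ_{W ∩ ↓_R y, W \ ↓_R y}(R|_W)` we have `W \ ↓_R y = ↑_T Z` and
`R|_W = τ_{W \ ↑_T Z, ↑_T Z}(T)`; consequently `σ` is injective on
`𝔐*_{Q+A_y}(X, Z ∪ {y})`. -/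
theorem stmt19 {α : Type*} (X Z : Set α) (hX : X.Finite) (hZ : Z.Finite)
    (hXZ : Disjoint X Z) (Q : Set (α × α)) (hQ : IsPor Z Q)
    (y : α) (hy : y ∉ X ∪ Z) :
    (∀ R ∈ MstarSet (Q ∪ {(y, y)}) X (Z ∪ {y}),
      ∀ T, T = tau ((X ∪ Z) ∩ down R y) ((X ∪ Z) \ down R y)
          (restrict R (X ∪ Z)) →
        (X ∪ Z) \ down R y = upSet T Z ∧
        restrict R (X ∪ Z) = tau ((X ∪ Z) \ upSet T Z) (upSet T Z) T) ∧
    Set.InjOn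
      (fun R => tau ((X ∪ Z) ∩ down R y) ((X ∪ Z) \ down R y)
        (restrict R (X ∪ Z)))
      (MstarSet (Q ∪ {(y, y)}) X (Z ∪ {y})) := by
  have hyX : y ∉ X := fun h => hy (Or.inl h)
  have hyZ : y ∉ Z := fun h => hy (Or.inr h)
  set W := X ∪ Z with hW
  have hcar' : X ∪ (Z ∪ {y}) = W ∪ {y} := by rw [hW, Set.union_assoc]
  have hfin : (X ∪ (Z ∪ {y})).Finite := hX.union (hZ.union (Set.finite_singleton y))
  have key : ∀ R ∈ MstarSet (Q ∪ {(y, y)}) X (Z ∪ {y}), ∀ T,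
      T = tau (W ∩ down R y) (W \ down R y) (restrict R W) →
      ((W \ down R y = upSet T Z ∧
        restrict R W = tau (W \ upSet T Z) (upSet T Z) T) ∧
       ∀ a b, ((a, b) ∈ R ↔ (a, b) ∈ restrict R W ∨ (a = y ∧ b = y) ∨
         (a ∈ W ∩ down R y ∧ b = y))) := by
    rintro R ⟨⟨hpor, hres, hconv⟩, hmax⟩ T hT
    obtain ⟨hsub, hrefl, hanti, htrans⟩ := hpor
    set D := W ∩ down R y with hDdef
    set C := W \ down R y with hCdef
    have hsubW : R ⊆ (W ∪ {y}) ×ˢ (W ∪ {y}) := by rw [← hcar']; exact hsub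
    have hreflW : ∀ a ∈ W, (a, a) ∈ R := fun a ha =>
      hrefl a (by rw [hcar']; exact Or.inl ha)
    -- no element of Z is below y
    have hZdown : ∀ z ∈ Z, (z, y) ∉ R := by
      intro z hz hzy
      have hmem : (z, y) ∈ Q ∪ {(y, y)} := by
        rw [← hres]; exact ⟨hzy, ⟨Or.inl hz, Or.inr rfl⟩⟩
      rcases hmem with h | h
      · exact hyZ ((hQ.1 h).2)
      · have : z = y := congrArg Prod.fst (Set.mem_singleton_iff.mp h)
        exact hyZ (this ▸ hz)
    -- y is maximal in R
    have hymax : up R y = {y} := by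
      have hy1 : up (Q ∪ {(y, y)}) y = {y} := by
        ext b
        simp only [up, Set.mem_setOf_eq, Set.mem_union, Set.mem_singleton_iff]
        constructor
        · rintro (h | h)
          · exact absurd (hQ.1 h).1 hyZ
          · exact (congrArg Prod.snd h)
        · rintro rfl; exact Or.inr rfl
      have : y ∈ maxPts (Q ∪ {(y, y)}) := hy1
      rw [hmax] at this; exact this
    have hymaxR : ∀ b, (y, b) ∈ R → b = y := fun b hb => by
      have : b ∈ up R y := hb
      rw [hymax] at this; exact this
    -- maximal elements of R lie in Z ∪ {y}
    have hmaxZ : ∀ m, up R m = {m} → m ∈ Z ∪ {y} := by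
      intro m hm
      have h1 : m ∈ maxPts R := hm
      rw [← hmax] at h1
      have h2 : m ∈ up (Q ∪ {(y, y)}) m := by rw [h1]; rfl
      rcases h2 with h | h
      · exact Or.inl (hQ.1 h).1
      · exact Or.inr (congrArg Prod.snd (Set.mem_singleton_iff.mp h))
    have hDW : D ⊆ W := Set.inter_subset_left
    have hCW : C ⊆ W := Set.diff_subset
    have hDC : ∀ a, a ∈ D → a ∈ C → False := fun a haD haC => haC.2 haD.2
    have hWDC : ∀ a ∈ W, a ∈ D ∨ a ∈ C := by
      intro a ha
      by_cases h : a ∈ down R y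
      · exact Or.inl ⟨ha, h⟩
      · exact Or.inr ⟨ha, h⟩
    have hZC : Z ⊆ C := fun z hz => ⟨Or.inr hz, hZdown z hz⟩
    -- membership characterization of T
    have hTmem : ∀ a b, ((a, b) ∈ T ↔ ((b, a) ∈ R ∧ b ∈ D ∧ a ∈ D) ∨
        (a ∈ D ∧ b ∈ C ∧ (a, b) ∉ R) ∨ ((b, a) ∈ R ∧ b ∈ C ∧ a ∈ C)) := by
      intro a b
      rw [hT, mem_tau]
      constructor
      · rintro (⟨⟨hba, -, -⟩, h1, h2⟩ | ⟨h1, h2, h3⟩ | ⟨⟨hba, -, -⟩, h1, h2⟩)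
        · exact Or.inl ⟨hba, h1, h2⟩
        · exact Or.inr (Or.inl ⟨h1, h2, fun h => h3 ⟨h, hDW h1, hCW h2⟩⟩)
        · exact Or.inr (Or.inr ⟨hba, h1, h2⟩)
      · rintro (⟨hba, h1, h2⟩ | ⟨h1, h2, h3⟩ | ⟨hba, h1, h2⟩)
        · exact Or.inl ⟨⟨hba, hDW h1, hDW h2⟩, h1, h2⟩
        · exact Or.inr (Or.inl ⟨h1, h2, fun h => h3 h.1⟩)
        · exact Or.inr (Or.inr ⟨⟨hba, hCW h1, hCW h2⟩, h1, h2⟩)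
    -- Claim 1 : C = ↑_T Z
    have hCup : C = upSet T Z := by
      ext x
      constructor
      · rintro ⟨hxW, hxd⟩
        obtain ⟨m, hm, hxm⟩ := exists_up_max hfin ⟨hsub, hrefl, hanti, htrans⟩ x
          (hreflW x hxW)
        have hmZ : m ∈ Z := by
          rcases hmaxZ m hm with h | h
          · exact h
          · exact absurd (Set.mem_singleton_iff.mp h ▸ hxm) hxd
        refine ⟨m, hmZ, ?_⟩
        rw [hTmem]
        exact Or.inr (Or.inr ⟨hxm, ⟨hxW, hxd⟩, hZC hmZ⟩)
      · rintro ⟨z, hz, hzx⟩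
        rw [hTmem] at hzx
        rcases hzx with ⟨-, -, hzD⟩ | ⟨hzD, -, -⟩ | ⟨-, hxC, hzC⟩
        · exact absurd hzD (fun h => hDC z h (hZC hz))
        · exact absurd hzD (fun h => hDC z h (hZC hz))
        · exact hxC
    have hWD : W \ C = D := by
      rw [hCdef, hDdef]
      ext a
      simp only [Set.mem_diff, Set.mem_inter_iff, not_and, not_not]
      constructor
      · rintro ⟨haW, h⟩; exact ⟨haW, h haW⟩
      · rintro ⟨haW, h⟩; exact ⟨haW, fun _ => h⟩
    -- Claim 2 : R|_W = τ_{D,C}(T)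
    have claim2 : restrict R W = tau D C T := by
      ext ⟨a, b⟩
      rw [mem_tau]
      constructor
      · rintro ⟨hab, haW, hbW⟩
        rcases hWDC a haW with haD | haC <;> rcases hWDC b hbW with hbD | hbC
        · exact Or.inl ⟨(hTmem b a).mpr (Or.inl ⟨hab, haD, hbD⟩), hbD, haD⟩
        · refine Or.inr (Or.inl ⟨haD, hbC, ?_⟩)
          intro hT'
          rcases (hTmem a b).mp hT' with ⟨-, hbD, -⟩ | ⟨-, -, hnab⟩ | ⟨-, -, haC⟩
          · exact hDC b hbD hbC
          · exact hnab hab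
          · exact hDC a haD haC
        · exact (haC.2 (htrans a b y hab hbD.2)).elim
        · exact Or.inr (Or.inr ⟨(hTmem b a).mpr (Or.inr (Or.inr ⟨hab, haC, hbC⟩)),
            hbC, haC⟩)
      · rintro (⟨hT', hbD, haD⟩ | ⟨haD, hbC, hnT⟩ | ⟨hT', hbC, haC⟩)
        · rcases (hTmem b a).mp hT' with ⟨hab, -, -⟩ | ⟨-, haC, -⟩ | ⟨-, haC, -⟩
          · exact ⟨hab, hDW haD, hDW hbD⟩
          · exact (hDC a haD haC).elim
          · exact (hDC a haD haC).elim
        · have hab : (a, b) ∈ R := by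
            by_contra hn
            exact hnT ((hTmem a b).mpr (Or.inr (Or.inl ⟨haD, hbC, hn⟩)))
          exact ⟨hab, hDW haD, hCW hbC⟩
        · rcases (hTmem b a).mp hT' with ⟨-, -, hbD⟩ | ⟨hbD, -, -⟩ | ⟨hab, -, -⟩
          · exact (hDC b hbD hbC).elim
          · exact (hDC b hbD hbC).elim
          · exact ⟨hab, hCW haC, hCW hbC⟩
    refine ⟨⟨hCup, ?_⟩, ?_⟩
    · rw [← hCup, hWD]; exact claim2
    · intro a b
      constructor
      · intro hab
        have haWy := (hsubW hab).1
        have hbWy := (hsubW hab).2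
        rcases hbWy with hbW | hby
        · rcases haWy with haW | hay
          · exact Or.inl ⟨hab, haW, hbW⟩
          · rw [Set.mem_singleton_iff] at hay
            have hb' : b = y := hymaxR b (hay ▸ hab)
            exact absurd (hb' ▸ hbW) hy
        · rw [Set.mem_singleton_iff] at hby
          subst hby
          rcases haWy with haW | hay
          · exact Or.inr (Or.inr ⟨⟨haW, hab⟩, rfl⟩)
          · rw [Set.mem_singleton_iff] at hay
            exact Or.inr (Or.inl ⟨hay, rfl⟩)
      · rintro (⟨hab, -, -⟩ | ⟨ha, hb⟩ | ⟨⟨haW, hay⟩, hb⟩)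
        · exact hab
        · rw [ha, hb]
          exact hrefl y (by rw [hcar']; exact Or.inr rfl)
        · rw [hb]; exact hay
  refine ⟨fun R hR T hT => (key R hR T hT).1, ?_⟩
  intro R1 h1 R2 h2 heq
  have heq' : tau (W ∩ down R1 y) (W \ down R1 y) (restrict R1 W) =
      tau (W ∩ down R2 y) (W \ down R2 y) (restrict R2 W) := heq
  have k1 := key R1 h1 _ rfl
  have k2 := key R2 h2 _ heq'
  have hC12 : W \ down R1 y = W \ down R2 y := k1.1.1.trans k2.1.1.symm
  have hres12 : restrict R1 W = restrict R2 W := k1.1.2.trans k2.1.2.symm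
  have hD12 : W ∩ down R1 y = W ∩ down R2 y := by
    have h := congrArg (W \ ·) hC12
    calc W ∩ down R1 y = W \ (W \ down R1 y) := by
          ext a
          simp only [Set.mem_diff, Set.mem_inter_iff, not_and, not_not]
          constructor
          · rintro ⟨haW, hd⟩; exact ⟨haW, fun _ => hd⟩
          · rintro ⟨haW, hd⟩; exact ⟨haW, hd haW⟩
      _ = W \ (W \ down R2 y) := by rw [hC12]
      _ = W ∩ down R2 y := by
          ext a
          simp only [Set.mem_diff, Set.mem_inter_iff, not_and, not_not]
          constructor
          · rintro ⟨haW, hd⟩; exact ⟨haW, hd haW⟩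
          · rintro ⟨haW, hd⟩; exact ⟨haW, fun _ => hd⟩
  ext ⟨a, b⟩
  rw [k1.2 a b, k2.2 a b, hres12, hD12]

end Erne
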